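/- Let $f_1,\dots,f_n : \mathbb{R}^d \to \mathbb{R}$ be $\mu$-strongly convex and $L$-smooth. Fix a permutation $\pi$ of $\{1,\dots,n\}$, stepsize $0 < \gamma \le 1/L$, and define within an epoch $x^{i+1} = x^i - \gamma\nabla f_{\pi_i}(x^i)$ and $x_\ast^i = x_\ast - \gamma\sum_{j=0}^{i-1}\nabla f_{\pi_j}(x_\ast)$ where $x_\ast$ minimizes $f = \frac{1}{n}\sum_i f_i$. Then for each $i$: $\|x^{i+1} - x_\ast^{i+1}\|^2 \le (1-\gamma\mu)\|x^i - x_\ast^i\|^2 + 2\gamma D_{f_{\pi_i}}(x_\ast^i, x_\ast)$. -/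

import Mathlib

open InnerProductSpace

variable {F : Type*} [NormedAddCommGroup F] [InnerProductSpace ℝ F] [CompleteSpace F]

lemma line_hasDerivAt {f : F → ℝ} (hd : Differentiable ℝ f) (x v : F) (t : ℝ) :
    HasDerivAt (fun t : ℝ => f (x + t • v)) (inner ℝ (gradient f (x + t • v)) v : ℝ) t := by
  have h1 : HasDerivAt (fun t : ℝ => x + t • v) v t := by
    simpa using ((hasDerivAt_id t).smul_const v).const_add x
  have h2 := (hd (x + t • v)).hasGradientAt
  rw [hasGradientAt_iff_hasFDerivAt] at h2
  have := h2.comp_hasDerivAt t h1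
  simp only [Function.comp_def, InnerProductSpace.toDual_apply_apply] at this
  exact this

lemma descent_lemma {f : F → ℝ} {L : ℝ} (hL : 0 < L)
    (hd : Differentiable ℝ f)
    (hsm : ∀ x y, ‖gradient f x - gradient f y‖ ≤ L * ‖x - y‖) (x y : F) :
    f y ≤ f x + (inner ℝ (gradient f x) (y - x) : ℝ) + L / 2 * ‖y - x‖ ^ 2 := by
  set v := y - x with hv
  set g : ℝ → ℝ := fun t => f (x + t • v) - t * (inner ℝ (gradient f x) v : ℝ)
      - L * t ^ 2 / 2 * ‖v‖ ^ 2 with hg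
  have hder : ∀ t : ℝ, HasDerivAt g
      ((inner ℝ (gradient f (x + t • v)) v : ℝ) - (inner ℝ (gradient f x) v : ℝ)
        - L * t * ‖v‖ ^ 2) t := by
    intro t
    have h1 := line_hasDerivAt hd x v t
    have h2 : HasDerivAt (fun t : ℝ => t * (inner ℝ (gradient f x) v : ℝ))
        (inner ℝ (gradient f x) v : ℝ) t := by
      simpa using (hasDerivAt_id t).mul_const (inner ℝ (gradient f x) v : ℝ)
    have h3 : HasDerivAt (fun t : ℝ => L * t ^ 2 / 2 * ‖v‖ ^ 2)
        (L * t * ‖v‖ ^ 2) t := by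
      have := ((hasDerivAt_pow 2 t).const_mul L).div_const 2
      have := this.mul_const (‖v‖ ^ 2)
      refine this.congr_deriv ?_
      ring
    exact (h1.sub h2).sub h3
  have hanti : AntitoneOn g (Set.Icc (0:ℝ) 1) := by
    apply antitoneOn_of_deriv_nonpos (convex_Icc 0 1)
    · exact fun t _ => ((hder t).continuousAt).continuousWithinAt
    · exact fun t _ => ((hder t).differentiableAt).differentiableWithinAt
    · intro t ht
      rw [interior_Icc] at ht
      rw [(hder t).deriv]
      have hb : (inner ℝ (gradient f (x + t • v) - gradient f x) v : ℝ)
          ≤ L * t * ‖v‖ ^ 2 := by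
        calc (inner ℝ (gradient f (x + t • v) - gradient f x) v : ℝ)
            ≤ ‖gradient f (x + t • v) - gradient f x‖ * ‖v‖ :=
              real_inner_le_norm _ _
          _ ≤ (L * ‖(x + t • v) - x‖) * ‖v‖ := by
              have := hsm (x + t • v) x
              nlinarith [norm_nonneg v]
          _ = L * t * ‖v‖ ^ 2 := by
              rw [add_sub_cancel_left, norm_smul]
              simp [abs_of_pos ht.1]
              ring
      rw [inner_sub_left] at hb
      linarith
  have hmono : g 1 ≤ g 0 :=
    hanti (by norm_num) (by norm_num) (by norm_num)
  have h0 : g 0 = f x := by simp [hg]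
  have h1 : g 1 = f y - (inner ℝ (gradient f x) v : ℝ) - L / 2 * ‖v‖ ^ 2 := by
    simp [hg, hv]
  rw [h0, h1] at hmono
  linarith

lemma cocoercivity {f : F → ℝ} {L : ℝ} (hL : 0 < L)
    (hd : Differentiable ℝ f)
    (hcv : ∀ x y, f x + (inner ℝ (gradient f x) (y - x) : ℝ) ≤ f y)
    (hsm : ∀ x y, ‖gradient f x - gradient f y‖ ≤ L * ‖x - y‖) (x y : F) :
    ‖gradient f x - gradient f y‖ ^ 2
      ≤ 2 * L * (f x - f y - (inner ℝ (gradient f y) (x - y) : ℝ)) := by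
  set g := gradient f x - gradient f y with hgdef
  set z := x - L⁻¹ • g with hz
  have hdes := descent_lemma hL hd hsm x z
  have hlow := hcv y z
  have hzx : z - x = -(L⁻¹ • g) := by rw [hz]; abel
  have h1 : (inner ℝ (gradient f x) (z - x) : ℝ) = -(L⁻¹ * inner ℝ (gradient f x) g) := by
    rw [hzx, inner_neg_right, real_inner_smul_right]
  have h2 : ‖z - x‖ ^ 2 = L⁻¹ ^ 2 * ‖g‖ ^ 2 := by
    rw [hzx, norm_neg, norm_smul]
    rw [Real.norm_eq_abs, abs_of_pos (inv_pos.mpr hL)]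
    ring
  have h3 : (inner ℝ (gradient f y) (z - y) : ℝ)
      = (inner ℝ (gradient f y) (x - y) : ℝ) - L⁻¹ * inner ℝ (gradient f y) g := by
    have : z - y = (x - y) - L⁻¹ • g := by rw [hz]; abel
    rw [this, inner_sub_right, real_inner_smul_right]
  have h4 : (inner ℝ (gradient f x) g : ℝ) - (inner ℝ (gradient f y) g : ℝ) = ‖g‖ ^ 2 := by
    rw [← inner_sub_left, ← hgdef, real_inner_self_eq_norm_sq]
  rw [h1, h2] at hdes
  rw [h3] at hlow
  have hL' : (0:ℝ) < L⁻¹ := inv_pos.mpr hL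
  have : L⁻¹ * ‖g‖ ^ 2 - L / 2 * (L⁻¹ ^ 2 * ‖g‖ ^ 2)
      ≤ f x - f y - (inner ℝ (gradient f y) (x - y) : ℝ) := by nlinarith
  have hsimp : L⁻¹ * ‖g‖ ^ 2 - L / 2 * (L⁻¹ ^ 2 * ‖g‖ ^ 2) = ‖g‖ ^ 2 / (2 * L) := by
    field_simp
    ring
  rw [hsimp, div_le_iff₀ (by positivity)] at this
  nlinarith [this]

set_option maxHeartbeats 1000000

/-- Per-step contraction for RR/SO with strongly convex components (key step of
Theorem 1): `‖x^{i+1} - x_*^{i+1}‖² ≤ (1-γμ)‖x^i - x_*^i‖² + 2γ D_{f_{π_i}}(x_*^i, x_*)`. -/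
theorem per_step_contraction_strongly_convex
    (d n : ℕ) (μ L γ : ℝ) (hμ : 0 < μ) (hL : 0 < L) (hγ : 0 < γ) (hγL : γ ≤ 1 / L)
    (f : Fin n → EuclideanSpace ℝ (Fin d) → ℝ)
    (hd : ∀ i, Differentiable ℝ (f i))
    (hsc : ∀ i x y, f i x + (inner ℝ (gradient (f i) x) (y - x) : ℝ)
        + μ / 2 * ‖y - x‖ ^ 2 ≤ f i y)
    (hsm : ∀ i x y, ‖gradient (f i) x - gradient (f i) y‖ ≤ L * ‖x - y‖)
    (π : Equiv.Perm (Fin n))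
    (xstar : EuclideanSpace ℝ (Fin d))
    (hmin : ∀ y, (n : ℝ)⁻¹ * ∑ i, f i xstar ≤ (n : ℝ)⁻¹ * ∑ i, f i y)
    (x : Fin (n + 1) → EuclideanSpace ℝ (Fin d))
    (hx : ∀ i : Fin n, x i.succ = x i.castSucc - γ • gradient (f (π i)) (x i.castSucc))
    (xs : Fin (n + 1) → EuclideanSpace ℝ (Fin d))
    (hxs : ∀ i : Fin (n + 1), xs i = xstar - γ •
        ∑ j ∈ Finset.univ.filter (fun j : Fin n => (j : ℕ) < (i : ℕ)),
          gradient (f (π j)) xstar)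
    (i : Fin n) :
    ‖x i.succ - xs i.succ‖ ^ 2
      ≤ (1 - γ * μ) * ‖x i.castSucc - xs i.castSucc‖ ^ 2
        + 2 * γ * (f (π i) (xs i.castSucc) - f (π i) xstar
            - (inner ℝ (gradient (f (π i)) xstar) (xs i.castSucc - xstar) : ℝ)) := by
  set A := x i.castSucc with hA
  set B := xs i.castSucc with hB
  set g := gradient (f (π i)) A with hg
  set s := gradient (f (π i)) xstar with hs
  -- step for the shadow sequence
  have hset : Finset.univ.filter (fun j : Fin n => (j : ℕ) < (i.succ : ℕ))
      = insert i (Finset.univ.filter (fun j : Fin n => (j : ℕ) < (i.castSucc : ℕ))) := by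
    ext j
    simp only [Finset.mem_filter, Finset.mem_insert, Finset.mem_univ, true_and,
      Fin.val_succ, Fin.coe_castSucc, Nat.lt_succ_iff_lt_or_eq, ← Fin.val_eq_val]
    tauto
  have hstep : xs i.succ = B - γ • s := by
    rw [hxs i.succ, hB, hxs i.castSucc, hset,
      Finset.sum_insert (by simp), hs]
    module
  have hre : x i.succ - xs i.succ = (A - B) - γ • (g - s) := by
    rw [hx i, hstep, ← hA, ← hg]
    module
  have hexp : ‖(A - B) - γ • (g - s)‖ ^ 2
      = ‖A - B‖ ^ 2 - 2 * γ * (inner ℝ (g - s) (A - B) : ℝ) + γ ^ 2 * ‖g - s‖ ^ 2 := by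
    rw [norm_sub_sq_real, real_inner_smul_right, norm_smul, Real.norm_eq_abs,
      real_inner_comm, mul_pow, sq_abs]
    ring
  -- Bregman divergences
  set Dba : ℝ := f (π i) B - f (π i) A - (inner ℝ g (B - A) : ℝ) with hDba
  set Dax : ℝ := f (π i) A - f (π i) xstar - (inner ℝ s (A - xstar) : ℝ) with hDax
  set Dbx : ℝ := f (π i) B - f (π i) xstar - (inner ℝ s (B - xstar) : ℝ) with hDbx
  have hthree : (inner ℝ (g - s) (A - B) : ℝ) = Dba + Dax - Dbx := by
    rw [hDba, hDax, hDbx]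
    simp only [inner_sub_left, inner_sub_right]
    ring
  have h1 : μ / 2 * ‖A - B‖ ^ 2 ≤ Dba := by
    have := hsc (π i) A B
    rw [norm_sub_rev] at this
    rw [hDba]
    linarith
  have hcv : ∀ u v, f (π i) u + (inner ℝ (gradient (f (π i)) u) (v - u) : ℝ) ≤ f (π i) v := by
    intro u v
    have := hsc (π i) u v
    nlinarith [sq_nonneg ‖v - u‖]
  have h2 : ‖g - s‖ ^ 2 ≤ 2 * L * Dax :=
    cocoercivity hL (hd (π i)) hcv (hsm (π i)) A xstar
  have h3 : (0:ℝ) ≤ Dax := by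
    have := hsc (π i) xstar A
    rw [hDax]
    nlinarith [sq_nonneg ‖A - xstar‖]
  have hγL' : γ * L ≤ 1 := (le_div_iff₀ hL).mp hγL
  rw [hre, hexp, hthree]
  have e1 : γ ^ 2 * ‖g - s‖ ^ 2 ≤ γ ^ 2 * (2 * L * Dax) :=
    mul_le_mul_of_nonneg_left h2 (sq_nonneg γ)
  have e2 : γ ^ 2 * (2 * L * Dax) ≤ 2 * γ * Dax := by
    nlinarith [mul_le_mul_of_nonneg_right hγL' h3]
  have e3 : γ * μ * ‖A - B‖ ^ 2 ≤ 2 * γ * Dba := by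
    nlinarith [mul_le_mul_of_nonneg_left h1 hγ.le]
  nlinarith [e1, e2, e3]
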